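/- Let Θ be a symmetric positive definite p×p matrix such that for some γ > 0 and all indices i, j one has Θ_{ij} = ST(Θ_{ij} − γ(S_{ij} − (Θ⁻¹)_{ij}), λγ). Then Θ is a global minimizer of Φ(·, λ) over the set of symmetric positive definite p×p matrices. -/

import Mathlib

open Matrix

/-- The GLASSO objective `Φ(Θ, λ) = −log det Θ + ⟨S, Θ⟩ + λ ‖Θ‖₁`. -/
noncomputable def glassoObj {p : ℕ} (S Θ : Matrix (Fin p) (Fin p) ℝ) (lam : ℝ) : ℝ :=
  -Real.log Θ.det + (∑ i, ∑ j, S i j * Θ i j) + lam * ∑ i, ∑ j, |Θ i j|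

/-- The soft-thresholding operator `ST(z, τ) = sign(z) · max(|z| − τ, 0)`. -/
noncomputable def softThresh (z τ : ℝ) : ℝ :=
  Real.sign z * max (|z| - τ) 0

open Finset



lemma trace_eq_sum_eig {n : Type*} [Fintype n] [DecidableEq n] {A : Matrix n n ℝ}
    (hA : A.IsHermitian) : A.trace = ∑ i, hA.eigenvalues i := by
  nth_rewrite 1 [hA.spectral_theorem]
  rw [Unitary.conjStarAlgAut_apply]
  rw [Matrix.trace_mul_cycle]
  rw [show (star (hA.eigenvectorUnitary : Matrix n n ℝ)) * (hA.eigenvectorUnitary : Matrix n n ℝ) = 1 from Unitary.coe_star_mul_self _]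
  rw [one_mul, trace_diagonal]
  simp

lemma logdet_le_trace_sub_card {n : Type*} [Fintype n] [DecidableEq n]
    {M : Matrix n n ℝ} (hM : M.PosDef) :
    Real.log M.det ≤ M.trace - (Fintype.card n : ℝ) := by
  have hdet : M.det = ∏ i, hM.1.eigenvalues i := by
    simpa using hM.1.det_eq_prod_eigenvalues
  rw [hdet, Real.log_prod (fun i _ => (hM.eigenvalues_pos i).ne'),
    trace_eq_sum_eig hM.1]
  have : ∑ i, Real.log (hM.1.eigenvalues i) ≤ ∑ i, (hM.1.eigenvalues i - 1) :=
    Finset.sum_le_sum fun i _ => Real.log_le_sub_one_of_pos (hM.eigenvalues_pos i)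
  rw [Finset.sum_sub_distrib, Finset.sum_const] at this
  simpa using this

lemma conj_posDef {n : Type*} [Fintype n] [DecidableEq n]
    {B R : Matrix n n ℝ} (hB : B.PosDef) (hR : R.IsHermitian) (hdR : IsUnit R) :
    (R * B * R).PosDef := by
  have h := hB.conjTranspose_mul_mul_same (Matrix.mulVec_injective_iff_isUnit.mpr hdR)
  rwa [hR.eq] at h

open scoped MatrixOrder in
lemma logdet_diff_le {n : Type*} [Fintype n] [DecidableEq n]
    {A B : Matrix n n ℝ} (hA : A.PosDef) (hB : B.PosDef) :
    Real.log B.det - Real.log A.det ≤ (A⁻¹ * B).trace - (Fintype.card n : ℝ) := by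
  set R := CFC.sqrt A⁻¹ with hRdef
  have hRR : R * R = A⁻¹ := CFC.sqrt_mul_sqrt_self _ hA.inv.posSemidef.nonneg
  have hRH : R.IsHermitian := (CFC.sqrt_nonneg A⁻¹).posSemidef.1
  have hdetA : 0 < A.det := hA.det_pos
  have hdetB : 0 < B.det := hB.det_pos
  have hdetR : R.det * R.det = A.det⁻¹ := by
    rw [← det_mul, hRR, det_nonsing_inv, Ring.inverse_eq_inv]
  have hRunit : IsUnit R := by
    rw [Matrix.isUnit_iff_isUnit_det]
    refine isUnit_iff_ne_zero.mpr fun h => ?_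
    rw [h, mul_zero] at hdetR
    exact (inv_pos.mpr hdetA).ne' hdetR.symm
  have hM : (R * B * R).PosDef := conj_posDef hB hRH hRunit
  have hdetM : (R * B * R).det = A.det⁻¹ * B.det := by
    rw [det_mul, det_mul]; ring_nf; rw [← hdetR]; ring
  have htr : (R * B * R).trace = (A⁻¹ * B).trace := by
    rw [Matrix.trace_mul_cycle, hRR]
  have := logdet_le_trace_sub_card hM
  rw [hdetM, htr, Real.log_mul (by positivity) hdetB.ne', Real.log_inv] at this
  linarith

lemma st_fix {t c lam γ : ℝ} (hlam : 0 < lam) (hγ : 0 < γ)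
    (h : t = (Real.sign (t - γ * c)) * max (|t - γ * c| - lam * γ) 0) :
    |c| ≤ lam ∧ c * t = -(lam * |t|) := by
  set z := t - γ * c with hz
  rcases lt_trichotomy z 0 with hz0 | hz0 | hz0
  · rw [Real.sign_of_neg hz0] at h
    rcases le_or_gt (|z|) (lam * γ) with hle | hlt
    · have ht : t = 0 := by rw [h, max_eq_right (by linarith)]; ring
      have habs : |z| = γ * |c| := by
        rw [hz, ht, zero_sub, abs_neg, abs_mul, abs_of_pos hγ]
      constructor
      · rw [habs] at hle; nlinarith
      · simp [ht]
    · have habs : |z| = -z := abs_of_neg hz0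
      have ht : t = z + lam * γ := by rw [h, max_eq_left (by linarith), habs]; ring
      have hc : c = lam := by
        have h1 : γ * c = lam * γ := by rw [hz] at ht; linarith
        have := mul_left_cancel₀ hγ.ne' (by linarith : γ * c = γ * lam)
        linarith
      have htneg : t < 0 := by rw [ht]; linarith [abs_of_neg hz0]
      refine ⟨by rw [hc, abs_of_pos hlam], ?_⟩
      rw [hc, abs_of_neg htneg]; ring
  · rw [hz0, Real.sign_zero, zero_mul] at h
    have hc : c = 0 := by
      have : γ * c = 0 := by rw [hz, h] at hz0; linarith
      rcases mul_eq_zero.mp this with h' | h'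
      · exact absurd h' hγ.ne'
      · exact h'
    simp [h, hc, hlam.le]
  · rw [Real.sign_of_pos hz0] at h
    rcases le_or_gt (|z|) (lam * γ) with hle | hlt
    · have ht : t = 0 := by rw [h, max_eq_right (by linarith)]; ring
      have habs : |z| = γ * |c| := by
        rw [hz, ht, zero_sub, abs_neg, abs_mul, abs_of_pos hγ]
      constructor
      · rw [habs] at hle; nlinarith
      · simp [ht]
    · have habs : |z| = z := abs_of_pos hz0
      have ht : t = z - lam * γ := by rw [h, max_eq_left (by linarith), habs]; ring
      have hc : c = -lam := by
        have h1 : γ * c = -(lam * γ) := by rw [hz] at ht; linarith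
        have := mul_left_cancel₀ hγ.ne' (by linarith : γ * c = γ * (-lam))
        linarith
      have htpos : 0 < t := by rw [ht]; linarith [abs_of_pos hz0]
      refine ⟨by rw [hc, abs_neg, abs_of_pos hlam], ?_⟩
      rw [hc, abs_of_pos htpos]; ring

lemma st_fix' {t c lam γ : ℝ} (hlam : 0 < lam) (hγ : 0 < γ)
    (h : t = softThresh (t - γ * c) (lam * γ)) :
    |c| ≤ lam ∧ c * t = -(lam * |t|) := by
  rw [softThresh] at h
  exact st_fix hlam hγ h


theorem stmt_6 {p : ℕ} (hp : 1 ≤ p) (S : Matrix (Fin p) (Fin p) ℝ) (hS : S.IsSymm)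
    (lam : ℝ) (hlam : 0 < lam)
    (Θ : Matrix (Fin p) (Fin p) ℝ) (hΘ : Θ.PosDef)
    (γ : ℝ) (hγ : 0 < γ)
    (hfix : ∀ i j, Θ i j = softThresh (Θ i j - γ * (S i j - Θ⁻¹ i j)) (lam * γ)) :
    ∀ Θ' : Matrix (Fin p) (Fin p) ℝ, Θ'.PosDef →
      glassoObj S Θ lam ≤ glassoObj S Θ' lam := by
  intro Θ' hΘ'
  have hkey : ∀ i j, |S i j - Θ⁻¹ i j| ≤ lam ∧
      (S i j - Θ⁻¹ i j) * Θ i j = -(lam * |Θ i j|) :=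
    fun i j => st_fix' hlam hγ (hfix i j)
  have hΘ'sym : ∀ i j, Θ' j i = Θ' i j := fun i j => by
    simpa using hΘ'.1.apply i j
  have hΘsym : ∀ i j, Θ j i = Θ i j := fun i j => by
    simpa using hΘ.1.apply i j
  have htr' : (Θ⁻¹ * Θ').trace = ∑ i, ∑ j, Θ⁻¹ i j * Θ' i j := by
    have h1 : (Θ⁻¹ * Θ').trace = ∑ i, ∑ j, Θ⁻¹ i j * Θ' j i := by
      simp [Matrix.trace, Matrix.diag, Matrix.mul_apply]
    rw [h1]
    exact Finset.sum_congr rfl fun i _ => Finset.sum_congr rfl fun j _ => by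
      rw [hΘ'sym i j]
  have htrΘ : (Θ⁻¹ * Θ).trace = (p : ℝ) := by
    rw [Matrix.nonsing_inv_mul Θ hΘ.det_pos.ne'.isUnit]
    simp [Matrix.trace_one]
  have htrΘexp : (Θ⁻¹ * Θ).trace = ∑ i, ∑ j, Θ⁻¹ i j * Θ i j := by
    have h1 : (Θ⁻¹ * Θ).trace = ∑ i, ∑ j, Θ⁻¹ i j * Θ j i := by
      simp [Matrix.trace, Matrix.diag, Matrix.mul_apply]
    rw [h1]
    exact Finset.sum_congr rfl fun i _ => Finset.sum_congr rfl fun j _ => by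
      rw [hΘsym i j]
  have hlog : Real.log Θ'.det - Real.log Θ.det ≤ (Θ⁻¹ * Θ').trace - (p : ℝ) := by
    simpa using logdet_diff_le hΘ hΘ'
  have expand : ∀ X : Matrix (Fin p) (Fin p) ℝ,
      ∑ i, ∑ j, ((S i j - Θ⁻¹ i j) * X i j + lam * |X i j|) =
      (∑ i, ∑ j, S i j * X i j) - (∑ i, ∑ j, Θ⁻¹ i j * X i j)
        + lam * (∑ i, ∑ j, |X i j|) := by
    intro X
    rw [Finset.mul_sum, ← Finset.sum_sub_distrib, ← Finset.sum_add_distrib]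
    refine Finset.sum_congr rfl fun i _ => ?_
    rw [Finset.mul_sum, ← Finset.sum_sub_distrib, ← Finset.sum_add_distrib]
    exact Finset.sum_congr rfl fun j _ => by ring
  have hzero : ∑ i, ∑ j, ((S i j - Θ⁻¹ i j) * Θ i j + lam * |Θ i j|) = 0 :=
    Finset.sum_eq_zero fun i _ => Finset.sum_eq_zero fun j _ => by
      rw [(hkey i j).2]; ring
  have hnonneg : 0 ≤ ∑ i, ∑ j, ((S i j - Θ⁻¹ i j) * Θ' i j + lam * |Θ' i j|) :=
    Finset.sum_nonneg fun i _ => Finset.sum_nonneg fun j _ => by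
      have h1 := (hkey i j).1
      have h2 : |(S i j - Θ⁻¹ i j) * Θ' i j| ≤ lam * |Θ' i j| := by
        rw [abs_mul]
        exact mul_le_mul_of_nonneg_right h1 (abs_nonneg _)
      linarith [neg_abs_le ((S i j - Θ⁻¹ i j) * Θ' i j)]
  have E := expand Θ
  have E' := expand Θ'
  rw [hzero] at E
  rw [E'] at hnonneg
  rw [← htrΘexp, htrΘ] at E
  rw [htr'] at hlog
  simp only [glassoObj]
  linarith
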